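/- The joint law of the direct observation and the relay observation in the Gaussian broadcast setup, namely the measure (1/2)·(N(h3,1) ⊗ N(h1,1)) + (1/2)·(N(−h3,1) ⊗ N(−h1,1)) on ℝ × ℝ, equals the composition (compProd) of the first marginal m := (1/2)·N(h3,1) + (1/2)·N(−h3,1) with the Markov kernel x ↦ μ_x, where μ_x := w(x) • N(h1,1) + (1−w(x)) • N(−h1,1). That is, the Bayes mixture μ_x is a disintegration (regular conditional distribution) of the relay observation given the direct observation. -/

import Mathlib

open MeasureTheory ProbabilityTheory Real
open scoped ENNReal

/-- Bayes posterior weight of source symbol `+1` given direct observation `x`. -/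
noncomputable def mixWeight (h3 x : ℝ) : ℝ :=
  Real.exp (-(x - h3) ^ 2 / 2) /
    (Real.exp (-(x - h3) ^ 2 / 2) + Real.exp (-(x + h3) ^ 2 / 2))

/-- Conditional law of the relay's observation given direct observation `x`:
`μ_x = w(x) • N(h1,1) + (1 - w(x)) • N(-h1,1)`. -/
noncomputable def muX (h1 h3 x : ℝ) : Measure ℝ :=
  ENNReal.ofReal (mixWeight h3 x) • gaussianReal h1 1
    + ENNReal.ofReal (1 - mixWeight h3 x) • gaussianReal (-h1) 1

lemma continuous_mixWeight (h3 : ℝ) : Continuous (mixWeight h3) := by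
  unfold mixWeight
  apply Continuous.div
  · fun_prop
  · fun_prop
  · intro x; positivity

lemma mixWeight_nonneg (h3 x : ℝ) : 0 ≤ mixWeight h3 x := by
  unfold mixWeight; positivity

lemma mixWeight_le_one (h3 x : ℝ) : mixWeight h3 x ≤ 1 := by
  unfold mixWeight
  rw [div_le_one (by positivity)]
  nlinarith [Real.exp_pos (-(x + h3) ^ 2 / 2)]

lemma mixWeight_mul (h3 x : ℝ) :
    mixWeight h3 x * (gaussianPDFReal h3 1 x + gaussianPDFReal (-h3) 1 x)
      = gaussianPDFReal h3 1 x := by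
  simp only [gaussianPDFReal, mixWeight, NNReal.coe_one, mul_one, sub_neg_eq_add]
  have hd : (0:ℝ) < Real.exp (-(x - h3) ^ 2 / 2) + Real.exp (-(x + h3) ^ 2 / 2) := by positivity
  field_simp

lemma one_sub_mixWeight_mul (h3 x : ℝ) :
    (1 - mixWeight h3 x) * (gaussianPDFReal h3 1 x + gaussianPDFReal (-h3) 1 x)
      = gaussianPDFReal (-h3) 1 x := by
  simp only [gaussianPDFReal, mixWeight, NNReal.coe_one, mul_one, sub_neg_eq_add]
  have hd : (0:ℝ) < Real.exp (-(x - h3) ^ 2 / 2) + Real.exp (-(x + h3) ^ 2 / 2) := by positivity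
  field_simp
  ring

lemma key_lintegral (h3 : ℝ) (f : ℝ → ℝ) (hf : Measurable f) (hf0 : ∀ x, 0 ≤ f x)
    (hfmul : ∀ x, f x * (gaussianPDFReal h3 1 x + gaussianPDFReal (-h3) 1 x)
      = gaussianPDFReal h3 1 x)
    {s : Set ℝ} (hs : MeasurableSet s) :
    ∫⁻ x in s, ENNReal.ofReal (f x) ∂(gaussianReal h3 1)
      + ∫⁻ x in s, ENNReal.ofReal (f x) ∂(gaussianReal (-h3) 1)
      = gaussianReal h3 1 s := by
  have hmeas : Measurable fun x => ENNReal.ofReal (f x) := hf.ennreal_ofReal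
  rw [gaussianReal_of_var_ne_zero h3 one_ne_zero,
      gaussianReal_of_var_ne_zero (-h3) one_ne_zero,
      restrict_withDensity hs, restrict_withDensity hs,
      lintegral_withDensity_eq_lintegral_mul _ (measurable_gaussianPDF _ _) hmeas,
      lintegral_withDensity_eq_lintegral_mul _ (measurable_gaussianPDF _ _) hmeas]
  simp only [Pi.mul_apply]
  rw [← lintegral_add_left (f := fun a => gaussianPDF h3 1 a * ENNReal.ofReal (f a))
        ((measurable_gaussianPDF h3 1).mul hmeas),
      withDensity_apply _ hs]
  congr 1
  ext x
  simp only [Pi.mul_apply, gaussianPDF_def]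
  rw [← ENNReal.ofReal_mul (gaussianPDFReal_nonneg _ _ _),
      ← ENNReal.ofReal_mul (gaussianPDFReal_nonneg _ _ _),
      ← ENNReal.ofReal_add (mul_nonneg (gaussianPDFReal_nonneg _ _ _) (hf0 x))
        (mul_nonneg (gaussianPDFReal_nonneg _ _ _) (hf0 x))]
  congr 1
  linear_combination hfmul x

lemma key_pos (h3 : ℝ) {s : Set ℝ} (hs : MeasurableSet s) :
    ∫⁻ x in s, ENNReal.ofReal (mixWeight h3 x) ∂(gaussianReal h3 1)
      + ∫⁻ x in s, ENNReal.ofReal (mixWeight h3 x) ∂(gaussianReal (-h3) 1)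
      = gaussianReal h3 1 s :=
  key_lintegral h3 _ (continuous_mixWeight h3).measurable (mixWeight_nonneg h3)
    (mixWeight_mul h3) hs

lemma key_neg (h3 : ℝ) {s : Set ℝ} (hs : MeasurableSet s) :
    ∫⁻ x in s, ENNReal.ofReal (1 - mixWeight h3 x) ∂(gaussianReal h3 1)
      + ∫⁻ x in s, ENNReal.ofReal (1 - mixWeight h3 x) ∂(gaussianReal (-h3) 1)
      = gaussianReal (-h3) 1 s := by
  have h := key_lintegral (-h3) (fun x => 1 - mixWeight h3 x)
    (by have := (continuous_mixWeight h3).measurable; fun_prop)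
    (fun x => by simpa using sub_nonneg.mpr (mixWeight_le_one h3 x))
    (fun x => by
      rw [neg_neg, add_comm]
      exact one_sub_mixWeight_mul h3 x)
    hs
  simp only [neg_neg] at h
  rw [add_comm]
  exact h

theorem bayes_mixture_is_disintegration (h1 h3 : ℝ)
    (κ : Kernel ℝ ℝ) [IsMarkovKernel κ] (hκ : ∀ x : ℝ, κ x = muX h1 h3 x) :
    ((1 / 2 : ℝ≥0∞) • ((gaussianReal h3 1).prod (gaussianReal h1 1))
        + (1 / 2 : ℝ≥0∞) • ((gaussianReal (-h3) 1).prod (gaussianReal (-h1) 1)))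
      = ((1 / 2 : ℝ≥0∞) • gaussianReal h3 1
          + (1 / 2 : ℝ≥0∞) • gaussianReal (-h3) 1).compProd κ := by
  set m : Measure ℝ := (1 / 2 : ℝ≥0∞) • gaussianReal h3 1
      + (1 / 2 : ℝ≥0∞) • gaussianReal (-h3) 1 with hm
  have hmprob : IsProbabilityMeasure m := by
    constructor
    simp only [hm, Measure.add_apply, Measure.smul_apply, smul_eq_mul, measure_univ, mul_one]
    exact ENNReal.add_halves 1
  haveI := hmprob
  have hmeasw : Measurable fun x => ENNReal.ofReal (mixWeight h3 x) :=
    (continuous_mixWeight h3).measurable.ennreal_ofReal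
  have hmeasw' : Measurable fun x => ENNReal.ofReal (1 - mixWeight h3 x) := by
    have := (continuous_mixWeight h3).measurable
    fun_prop
  haveI : IsFiniteMeasure
      ((1 / 2 : ℝ≥0∞) • ((gaussianReal h3 1).prod (gaussianReal h1 1))
        + (1 / 2 : ℝ≥0∞) • ((gaussianReal (-h3) 1).prod (gaussianReal (-h1) 1))) := by
    constructor
    simp only [Measure.add_apply, Measure.smul_apply, smul_eq_mul, measure_univ, mul_one]
    rw [ENNReal.add_halves]
    exact ENNReal.one_lt_top
  refine ext_of_generate_finite _ generateFrom_prod.symm isPiSystem_prod ?_ ?_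
  · rintro _ ⟨s, hs, t, ht, rfl⟩
    have hs' : MeasurableSet s := hs
    have ht' : MeasurableSet t := ht
    rw [Measure.compProd_apply_prod hs' ht']
    have hκt : ∀ x, κ x t = ENNReal.ofReal (mixWeight h3 x) * gaussianReal h1 1 t
        + ENNReal.ofReal (1 - mixWeight h3 x) * gaussianReal (-h1) 1 t := by
      intro x
      rw [hκ x]
      simp [muX]
    simp_rw [hκt]
    rw [hm, Measure.restrict_add, Measure.restrict_smul, Measure.restrict_smul,
        lintegral_add_measure, lintegral_smul_measure, lintegral_smul_measure]
    have hsplit : ∀ ν : Measure ℝ,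
        ∫⁻ x, (ENNReal.ofReal (mixWeight h3 x) * gaussianReal h1 1 t
          + ENNReal.ofReal (1 - mixWeight h3 x) * gaussianReal (-h1) 1 t) ∂ν
        = (∫⁻ x, ENNReal.ofReal (mixWeight h3 x) ∂ν) * gaussianReal h1 1 t
          + (∫⁻ x, ENNReal.ofReal (1 - mixWeight h3 x) ∂ν) * gaussianReal (-h1) 1 t := by
      intro ν
      rw [lintegral_add_left (hmeasw.mul_const _), lintegral_mul_const _ hmeasw,
          lintegral_mul_const _ hmeasw']
    rw [hsplit, hsplit]
    have k1 := key_pos h3 hs'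
    have k2 := key_neg h3 hs'
    simp only [Measure.add_apply, Measure.smul_apply, smul_eq_mul, Measure.prod_prod]
    rw [← k1, ← k2]
    ring
  · simp only [Measure.add_apply, Measure.smul_apply, smul_eq_mul, measure_univ, mul_one,
      ENNReal.add_halves]
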